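/- Let S and r be parameters with 0 < S < 4r. There exists a twice continuously differentiable function u₀ : ℝ → ℝ such that: (i) u₀''(x) + S·f(u₀(x)) + (2S/r)(2u₀(x)−1)(u₀'(x))² = 0 for all x ∈ ℝ; (ii) lim_{x→−∞} u₀(x) = 1 and lim_{x→+∞} u₀(x) = 0; (iii) 0 < u₀(x) < 1 for all x and u₀ is strictly decreasing; (iv) u₀(0) = 1/2; (v) u₀(−x) = 1 − u₀(x) for all x ∈ ℝ. -/

import Mathlib

open Real Filter Topology

noncomputable def fpoly (u : ℝ) : ℝ := u * (2 * u - 1) * (1 - u)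

namespace SW

noncomputable def G (S r u : ℝ) : ℝ :=
  r ^ 2 / (8 * S) * (Real.exp (4 * S / r * (u * (1 - u))) - 1 - 4 * S / r * (u * (1 - u)))

noncomputable def G' (S r u : ℝ) : ℝ :=
  r ^ 2 / (8 * S) * ((Real.exp (4 * S / r * (u * (1 - u))) - 1) * (4 * S / r * (1 - 2 * u)))

noncomputable def F (S r u : ℝ) : ℝ := Real.sqrt (G S r u)

noncomputable def X (S r u : ℝ) : ℝ := ∫ s in u..(1/2 : ℝ), (F S r s)⁻¹

variable {S r : ℝ} (hS : 0 < S) (hr : 0 < r)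

lemma G_symm (u : ℝ) : G S r (1 - u) = G S r u := by
  unfold G
  rw [show (1 - u) * (1 - (1 - u)) = u * (1 - u) by ring]

lemma F_symm (u : ℝ) : F S r (1 - u) = F S r u := by unfold F; rw [G_symm]

include hS hr

lemma G_nonneg (u : ℝ) : 0 ≤ G S r u := by
  have h := Real.add_one_le_exp (4 * S / r * (u * (1 - u)))
  have hK : 0 ≤ r ^ 2 / (8 * S) := by positivity
  unfold G
  nlinarith

lemma G_pos {u : ℝ} (hu : u ∈ Set.Ioo (0:ℝ) 1) : 0 < G S r u := by
  have ht : 0 < u * (1 - u) := mul_pos hu.1 (by linarith [hu.2])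
  have harg : (4 * S / r * (u * (1 - u))) ≠ 0 := by positivity
  have h := Real.add_one_lt_exp harg
  have hK : 0 < r ^ 2 / (8 * S) := by positivity
  unfold G
  nlinarith

lemma F_pos {u : ℝ} (hu : u ∈ Set.Ioo (0:ℝ) 1) : 0 < F S r u :=
  Real.sqrt_pos.2 (G_pos hS hr hu)

lemma F_sq (u : ℝ) : (F S r u) ^ 2 = G S r u := Real.sq_sqrt (G_nonneg hS hr u)

omit hS hr

lemma hasDerivAt_G (hu : True) (u : ℝ) : HasDerivAt (G S r) (G' S r u) u := by
  have h1 : HasDerivAt (fun u : ℝ => u * (1 - u)) (1 - 2 * u) u := by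
    have h0 := (hasDerivAt_id u).mul ((hasDerivAt_id u).const_sub 1)
    simp only [id_eq] at h0
    exact h0.congr_deriv (by ring)
  have h2 : HasDerivAt (fun u : ℝ => 4 * S / r * (u * (1 - u))) (4 * S / r * (1 - 2 * u)) u :=
    h1.const_mul _
  have h3 := h2.exp
  have h4 := ((h3.sub_const 1).sub h2).const_mul (r ^ 2 / (8 * S))
  refine h4.congr_deriv ?_
  unfold G'; ring

lemma continuous_G : Continuous (G S r) := by unfold G; fun_prop

lemma continuous_G' : Continuous (G' S r) := by unfold G'; fun_prop

lemma continuous_F : Continuous (F S r) := Real.continuous_sqrt.comp continuous_G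

include hS hr

lemma hasDerivAt_F {u : ℝ} (hu : u ∈ Set.Ioo (0:ℝ) 1) :
    HasDerivAt (F S r) (G' S r u / (2 * F S r u)) u := by
  have h := (Real.hasDerivAt_sqrt (G_pos hS hr hu).ne').comp u (hasDerivAt_G trivial u)
  refine h.congr_deriv ?_
  unfold F; ring

lemma contOn_Finv : ContinuousOn (fun s => (F S r s)⁻¹) (Set.Ioo (0:ℝ) 1) :=
  (continuous_F.continuousOn).inv₀ fun x hx => (F_pos hS hr hx).ne'

lemma intInt {a b : ℝ} (ha : a ∈ Set.Ioo (0:ℝ) 1) (hb : b ∈ Set.Ioo (0:ℝ) 1) :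
    IntervalIntegrable (fun s => (F S r s)⁻¹) MeasureTheory.volume a b :=
  ((contOn_Finv hS hr).mono (Set.ordConnected_Ioo.uIcc_subset ha hb)).intervalIntegrable

lemma hasDerivAt_X {u : ℝ} (hu : u ∈ Set.Ioo (0:ℝ) 1) :
    HasDerivAt (X S r) (-(F S r u)⁻¹) u := by
  have h12 : (1/2 : ℝ) ∈ Set.Ioo (0:ℝ) 1 := by norm_num
  have h := intervalIntegral.integral_hasDerivAt_right (intInt hS hr h12 hu)
    ((contOn_Finv hS hr).stronglyMeasurableAtFilter isOpen_Ioo _ hu)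
    ((contOn_Finv hS hr).continuousAt (isOpen_Ioo.mem_nhds hu))
  have hXeq : X S r = fun u => -∫ s in (1/2 : ℝ)..u, (F S r s)⁻¹ := by
    funext v; rw [X, intervalIntegral.integral_symm]
  rw [hXeq]
  exact h.neg

lemma X_half : X S r (1/2) = 0 := intervalIntegral.integral_same

lemma strictAntiOn_X : StrictAntiOn (X S r) (Set.Ioo (0:ℝ) 1) := by
  apply strictAntiOn_of_deriv_neg (convex_Ioo 0 1)
    (fun u hu => ((hasDerivAt_X hS hr hu).continuousAt).continuousWithinAt)
  intro u hu
  rw [interior_Ioo] at hu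
  rw [(hasDerivAt_X hS hr hu).deriv]
  simp only [neg_neg, Left.neg_neg_iff]
  exact inv_pos.2 (F_pos hS hr hu)

lemma X_symm (u : ℝ) : X S r (1 - u) = -(X S r u) := by
  have h1 : X S r u = ∫ s in u..(1/2:ℝ), (F S r (1 - s))⁻¹ := by
    rw [X]; exact intervalIntegral.integral_congr fun x _ => by rw [F_symm]
  have h2 := intervalIntegral.integral_comp_sub_left (a := u) (b := (1/2:ℝ))
    (fun s => (F S r s)⁻¹) 1
  rw [h2] at h1
  norm_num at h1
  rw [X, intervalIntegral.integral_symm, ← h1]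


omit hS hr

lemma exp_quad {x : ℝ} (hx : 0 ≤ x) : Real.exp x - 1 - x ≤ x ^ 2 * Real.exp x := by
  have h := Real.add_one_le_exp (-x)
  have hpos := Real.exp_pos x
  have hmul : Real.exp (-x) * Real.exp x = 1 := by
    rw [← Real.exp_add]; simp
  nlinarith [mul_le_mul_of_nonneg_right h hpos.le,
    mul_nonneg hx (mul_nonneg hx hpos.le)]

noncomputable def Cb (S r : ℝ) : ℝ := Real.sqrt (2 * S * Real.exp (S / r))

include hS hr

lemma Cb_pos : 0 < Cb S r := Real.sqrt_pos.2 (by positivity)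

lemma F_le {u : ℝ} (hu : u ∈ Set.Icc (0:ℝ) 1) : F S r u ≤ Cb S r * u := by
  obtain ⟨hu0, hu1⟩ := hu
  set t := u * (1 - u) with ht
  have ht0 : 0 ≤ t := mul_nonneg hu0 (by linarith)
  have htu : t ≤ u := by nlinarith
  have ht4 : t ≤ 1/4 := by nlinarith [sq_nonneg (u - 1/2)]
  have hx0 : 0 ≤ 4 * S / r * t := by positivity
  have hxb : 4 * S / r * t ≤ S / r := by
    have h1 : 4 * S / r * t ≤ 4 * S / r * (1/4) :=
      mul_le_mul_of_nonneg_left ht4 (by positivity)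
    have h2 : 4 * S / r * (1/4) = S / r := by ring
    linarith
  have hG : G S r u ≤ 2 * S * Real.exp (S / r) * u ^ 2 := by
    have h1 := exp_quad hx0
    have h2 : Real.exp (4 * S / r * t) ≤ Real.exp (S / r) := Real.exp_le_exp.2 hxb
    have hK : 0 < r ^ 2 / (8 * S) := by positivity
    have h3 : G S r u ≤ r ^ 2 / (8 * S) * ((4 * S / r * t) ^ 2 * Real.exp (S / r)) := by
      unfold G
      rw [← ht]
      have : Real.exp (4 * S / r * t) - 1 - 4 * S / r * t
          ≤ (4 * S / r * t) ^ 2 * Real.exp (S / r) := by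
        calc Real.exp (4 * S / r * t) - 1 - 4 * S / r * t
            ≤ (4 * S / r * t) ^ 2 * Real.exp (4 * S / r * t) := h1
          _ ≤ (4 * S / r * t) ^ 2 * Real.exp (S / r) := by
              exact mul_le_mul_of_nonneg_left h2 (by positivity)
      exact mul_le_mul_of_nonneg_left this hK.le
    have h4 : r ^ 2 / (8 * S) * ((4 * S / r * t) ^ 2 * Real.exp (S / r))
        = 2 * S * Real.exp (S / r) * t ^ 2 := by
      field_simp; ring
    have h5 : 2 * S * Real.exp (S / r) * t ^ 2 ≤ 2 * S * Real.exp (S / r) * u ^ 2 := by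
      have : t ^ 2 ≤ u ^ 2 := by nlinarith
      exact mul_le_mul_of_nonneg_left this (by positivity)
    linarith
  unfold F Cb
  calc Real.sqrt (G S r u) ≤ Real.sqrt (2 * S * Real.exp (S / r) * u ^ 2) :=
        Real.sqrt_le_sqrt hG
    _ = Real.sqrt (2 * S * Real.exp (S / r)) * u := by
        rw [Real.sqrt_mul (by positivity), Real.sqrt_sq hu0]

open intervalIntegral in
lemma X_lower {u : ℝ} (hu0 : 0 < u) (hu2 : u ≤ 1/2) :
    (Cb S r)⁻¹ * (Real.log (1/2) - Real.log u) ≤ X S r u := by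
  have huI : u ∈ Set.Ioo (0:ℝ) 1 := ⟨hu0, by linarith⟩
  have h12 : (1/2 : ℝ) ∈ Set.Ioo (0:ℝ) 1 := by norm_num
  have hC := Cb_pos hS hr (S := S) (r := r)
  have hint1 : IntervalIntegrable (fun s => (Cb S r)⁻¹ * s⁻¹) MeasureTheory.volume u (1/2) := by
    apply IntervalIntegrable.const_mul
    apply intervalIntegral.intervalIntegrable_inv (f := fun x : ℝ => x) ?_ continuousOn_id
    intro x hx
    rw [Set.uIcc_of_le (by linarith)] at hx
    exact (lt_of_lt_of_le hu0 hx.1).ne'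
  have hmono : ∫ s in u..(1/2:ℝ), (Cb S r)⁻¹ * s⁻¹ ≤ X S r u := by
    rw [X]
    apply intervalIntegral.integral_mono_on (by linarith) hint1 (intInt hS hr huI h12)
    intro s hs
    have hs0 : 0 < s := lt_of_lt_of_le hu0 hs.1
    have hs1 : s < 1 := by linarith [hs.2]
    have hF := F_pos hS hr ⟨hs0, hs1⟩
    have hFle := F_le hS hr (u := s) ⟨hs0.le, hs1.le⟩
    rw [← mul_inv]
    exact inv_anti₀ hF hFle
  have heval : ∫ s in u..(1/2:ℝ), (Cb S r)⁻¹ * s⁻¹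
      = (Cb S r)⁻¹ * (Real.log (1/2) - Real.log u) := by
    rw [integral_const_mul, integral_inv_of_pos hu0 (by norm_num),
      Real.log_div (by norm_num) hu0.ne']
  linarith [heval ▸ hmono]

lemma exists_big (x : ℝ) : ∃ a ∈ Set.Ioo (0:ℝ) 1, x < X S r a := by
  have hC := Cb_pos hS hr (S := S) (r := r)
  set u := min (1/4 : ℝ) (Real.exp (Real.log (1/2) - Cb S r * (x + 1))) with hu
  have hu0 : 0 < u := lt_min (by norm_num) (Real.exp_pos _)
  have hu2 : u ≤ 1/4 := min_le_left _ _
  have hlog : Real.log u ≤ Real.log (1/2) - Cb S r * (x + 1) := by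
    calc Real.log u ≤ Real.log (Real.exp (Real.log (1/2) - Cb S r * (x + 1))) :=
          Real.log_le_log hu0 (min_le_right _ _)
      _ = Real.log (1/2) - Cb S r * (x + 1) := Real.log_exp _
  refine ⟨u, ⟨hu0, by linarith⟩, ?_⟩
  have h1 := X_lower hS hr hu0 (by linarith)
  have h2 : Cb S r * (x + 1) ≤ Real.log (1/2) - Real.log u := by linarith
  have h3 : (Cb S r)⁻¹ * (Cb S r * (x + 1)) ≤ (Cb S r)⁻¹ * (Real.log (1/2) - Real.log u) :=
    mul_le_mul_of_nonneg_left h2 (by positivity)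
  rw [inv_mul_cancel_left₀ hC.ne'] at h3
  linarith

lemma exists_small (x : ℝ) : ∃ b ∈ Set.Ioo (0:ℝ) 1, X S r b < x := by
  obtain ⟨a, ha, hXa⟩ := exists_big hS hr (-x)
  refine ⟨1 - a, ⟨by linarith [ha.2], by linarith [ha.1]⟩, ?_⟩
  rw [X_symm hS hr]
  linarith

lemma exists_sol (x : ℝ) : ∃ u ∈ Set.Ioo (0:ℝ) 1, X S r u = x := by
  obtain ⟨a, ha, hXa⟩ := exists_big hS hr x
  obtain ⟨b, hb, hXb⟩ := exists_small hS hr x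
  have hab : a < b := by
    rcases lt_trichotomy a b with h | h | h
    · exact h
    · exfalso; rw [h] at hXa; linarith
    · exfalso; have := strictAntiOn_X hS hr hb ha h; linarith
  have hsub : Set.Icc a b ⊆ Set.Ioo (0:ℝ) 1 :=
    fun y hy => ⟨lt_of_lt_of_le ha.1 hy.1, lt_of_le_of_lt hy.2 hb.2⟩
  have hcont : ContinuousOn (X S r) (Set.Icc a b) :=
    fun y hy => ((hasDerivAt_X hS hr (hsub hy)).continuousAt).continuousWithinAt
  have := intermediate_value_Icc' hab.le hcont
  have hx : x ∈ Set.Icc (X S r b) (X S r a) := ⟨hXb.le, hXa.le⟩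
  obtain ⟨c, hc, hXc⟩ := this hx
  exact ⟨c, hsub hc, hXc⟩

lemma key_identity (u : ℝ) :
    G' S r u / 2 + S * fpoly u + 2 * S / r * (2 * u - 1) * G S r u = 0 := by
  unfold G G' fpoly
  field_simp
  ring

end SW

theorem standing_wave_existence (S r : ℝ) (hS : 0 < S) (hSr : S < 4 * r) :
    ∃ u₀ : ℝ → ℝ, ContDiff ℝ 2 u₀ ∧
      (∀ x : ℝ, deriv (deriv u₀) x + S * fpoly (u₀ x)
        + (2 * S / r) * (2 * u₀ x - 1) * (deriv u₀ x) ^ 2 = 0) ∧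
      Tendsto u₀ atBot (𝓝 1) ∧ Tendsto u₀ atTop (𝓝 0) ∧
      (∀ x : ℝ, 0 < u₀ x ∧ u₀ x < 1) ∧ StrictAnti u₀ ∧
      u₀ 0 = 1 / 2 ∧ (∀ x : ℝ, u₀ (-x) = 1 - u₀ x) := by
  have hr : 0 < r := by linarith
  classical
  set u₀ : ℝ → ℝ := fun x => Classical.choose (SW.exists_sol hS hr x) with hu₀def
  have hspec : ∀ x : ℝ, u₀ x ∈ Set.Ioo (0:ℝ) 1 ∧ SW.X S r (u₀ x) = x := by
    intro x
    obtain ⟨h1, h2⟩ := Classical.choose_spec (SW.exists_sol hS hr x)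
    exact ⟨h1, h2⟩
  have hmem : ∀ x, u₀ x ∈ Set.Ioo (0:ℝ) 1 := fun x => (hspec x).1
  have hXu : ∀ x, SW.X S r (u₀ x) = x := fun x => (hspec x).2
  have hanti := SW.strictAntiOn_X hS hr
  have huniq : ∀ (x v : ℝ), v ∈ Set.Ioo (0:ℝ) 1 → SW.X S r v = x → v = u₀ x := by
    intro x v hv hXv
    exact hanti.injOn hv (hmem x) (by rw [hXv, hXu])
  have hsym : ∀ x, u₀ (-x) = 1 - u₀ x := by
    intro x
    have h1 : (1 : ℝ) - u₀ x ∈ Set.Ioo (0:ℝ) 1 :=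
      ⟨by linarith [(hmem x).2], by linarith [(hmem x).1]⟩
    exact (huniq (-x) (1 - u₀ x) h1 (by rw [SW.X_symm hS hr, hXu])).symm
  have h0 : u₀ 0 = 1/2 := (huniq 0 (1/2) (by norm_num) (SW.X_half hS hr)).symm
  have hStrictAnti : StrictAnti u₀ := by
    intro x y hxy
    rcases lt_trichotomy (u₀ y) (u₀ x) with h | h | h
    · exact h
    · exfalso
      have : x = y := by rw [← hXu x, ← hXu y, h]
      linarith
    · exfalso
      have := hanti (hmem x) (hmem y) h
      rw [hXu, hXu] at this
      linarith
  have hlt : ∀ {v x : ℝ}, v ∈ Set.Ioo (0:ℝ) 1 → SW.X S r v < x → u₀ x < v := by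
    intro v x hv h
    rcases lt_trichotomy (u₀ x) v with hc | hc | hc
    · exact hc
    · exfalso; rw [← hc, hXu] at h; exact lt_irrefl _ h
    · exfalso
      have := hanti hv (hmem x) hc
      rw [hXu] at this
      linarith
  have hgt : ∀ {v x : ℝ}, v ∈ Set.Ioo (0:ℝ) 1 → x < SW.X S r v → v < u₀ x := by
    intro v x hv h
    rcases lt_trichotomy v (u₀ x) with hc | hc | hc
    · exact hc
    · exfalso; rw [hc, hXu] at h; exact lt_irrefl _ h
    · exfalso
      have := hanti (hmem x) hv hc
      rw [hXu] at this
      linarith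
  have hcontAt : ∀ a, ContinuousAt u₀ a := by
    intro a
    rw [Metric.continuousAt_iff]
    intro ε hε
    obtain ⟨ha1, ha2⟩ := hmem a
    set u := u₀ a with hu
    set l := max (u/2) (u - ε/2) with hldef
    set h := min ((u+1)/2) (u + ε/2) with hhdef
    have hl0 : 0 < l := lt_max_iff.2 (Or.inl (by linarith))
    have hlu : l < u := max_lt (by linarith) (by linarith)
    have huh : u < h := lt_min (by linarith) (by linarith)
    have hh1 : h < 1 := min_lt_iff.2 (Or.inl (by linarith))
    have hlI : l ∈ Set.Ioo (0:ℝ) 1 := ⟨hl0, by linarith⟩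
    have hhI : h ∈ Set.Ioo (0:ℝ) 1 := ⟨by linarith, hh1⟩
    have hXl : a < SW.X S r l := by
      have := hanti hlI (hmem a) hlu
      rw [hXu] at this
      exact this
    have hXh : SW.X S r h < a := by
      have := hanti (hmem a) hhI huh
      rw [hXu] at this
      exact this
    refine ⟨min (a - SW.X S r h) (SW.X S r l - a),
      lt_min (by linarith) (by linarith), fun {y} hy => ?_⟩
    rw [Real.dist_eq] at hy
    have habs := abs_lt.1 hy
    have hy1 : y < SW.X S r l := by
      have := min_le_right (a - SW.X S r h) (SW.X S r l - a)
      linarith [habs.2]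
    have hy2 : SW.X S r h < y := by
      have := min_le_left (a - SW.X S r h) (SW.X S r l - a)
      linarith [habs.1]
    have h1 : l < u₀ y := hgt hlI hy1
    have h2 : u₀ y < h := hlt hhI hy2
    rw [Real.dist_eq, abs_lt]
    constructor
    · linarith [le_max_right (u/2) (u - ε/2)]
    · linarith [min_le_right ((u+1)/2) (u + ε/2)]
  have hF0 : ∀ x, 0 < SW.F S r (u₀ x) := fun x => SW.F_pos hS hr (hmem x)
  have hd : ∀ x, HasDerivAt u₀ (-SW.F S r (u₀ x)) x := by
    intro x
    have hX' := SW.hasDerivAt_X hS hr (hmem x)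
    have hne : -(SW.F S r (u₀ x))⁻¹ ≠ 0 :=
      neg_ne_zero.2 (inv_ne_zero (hF0 x).ne')
    have h := HasDerivAt.of_local_left_inverse (hcontAt x) hX' hne
      (Filter.Eventually.of_forall fun y => hXu y)
    refine h.congr_deriv ?_
    rw [inv_neg, inv_inv]
  have hderiv : deriv u₀ = fun x => -SW.F S r (u₀ x) := funext fun x => (hd x).deriv
  have hcontu : Continuous u₀ := continuous_iff_continuousAt.2 hcontAt
  have hdiff : Differentiable ℝ u₀ := fun x => (hd x).differentiableAt
  have hd2 : ∀ x, HasDerivAt (fun y => -SW.F S r (u₀ y)) (SW.G' S r (u₀ x) / 2) x := by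
    intro x
    have hF := SW.hasDerivAt_F hS hr (hmem x)
    have hcomp := (hF.comp x (hd x)).neg
    refine hcomp.congr_deriv ?_
    field_simp [(hF0 x).ne']
  have hderiv2 : ∀ x, deriv (deriv u₀) x = SW.G' S r (u₀ x) / 2 := by
    intro x
    rw [hderiv]
    exact (hd2 x).deriv
  have hC1d : ContDiff ℝ 1 (deriv u₀) := by
    rw [hderiv, contDiff_one_iff_deriv]
    refine ⟨fun x => (hd2 x).differentiableAt, ?_⟩
    have heq : deriv (fun y => -SW.F S r (u₀ y)) = fun x => SW.G' S r (u₀ x) / 2 :=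
      funext fun x => (hd2 x).deriv
    rw [heq]
    exact ((SW.continuous_G' (S := S) (r := r)).comp hcontu).div_const 2
  have hC2 : ContDiff ℝ 2 u₀ := by
    have h21 : (2 : WithTop ℕ∞) = 1 + 1 := by norm_num
    rw [h21, contDiff_succ_iff_deriv]
    exact ⟨hdiff, by simp, hC1d⟩
  have htop : Tendsto u₀ atTop (𝓝 0) := by
    rw [Metric.tendsto_atTop]
    intro ε hε
    set ε' := min (ε/2) (1/4 : ℝ) with hε'def
    have hε'I : ε' ∈ Set.Ioo (0:ℝ) 1 :=
      ⟨lt_min (by linarith) (by norm_num),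
       lt_of_le_of_lt (min_le_right _ _) (by norm_num)⟩
    refine ⟨SW.X S r ε' + 1, fun x hx => ?_⟩
    have hlt' : u₀ x < ε' := hlt hε'I (by linarith)
    rw [Real.dist_eq, sub_zero, abs_of_pos (hmem x).1]
    have := min_le_left (ε/2) (1/4 : ℝ)
    linarith
  have hbot : Tendsto u₀ atBot (𝓝 1) := by
    have hneg : Tendsto (fun x : ℝ => -x) atBot atTop := tendsto_neg_atBot_atTop
    have h2 := htop.comp hneg
    have h3 := (tendsto_const_nhds (x := (1:ℝ)) (f := atBot)).sub h2
    have h4 : (fun x : ℝ => 1 - u₀ (-x)) = u₀ := funext fun x => by rw [hsym]; ring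
    simp only [Function.comp] at h3
    rw [h4] at h3
    simpa using h3
  refine ⟨u₀, hC2, ?_, hbot, htop, fun x => ⟨(hmem x).1, (hmem x).2⟩, hStrictAnti, h0, hsym⟩
  intro x
  rw [hderiv2, hderiv]
  have hsq : (-SW.F S r (u₀ x)) ^ 2 = SW.G S r (u₀ x) := by
    rw [neg_pow]
    simp [SW.F_sq hS hr]
  rw [hsq]
  linarith [SW.key_identity hS hr (u₀ x)]
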